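/- Let H = diag(1, -1) and B the 2×2 zero matrix. For every a ∈ (0, 1], the matrix B(a) = diag(a, -a) is H-nonnegative but has no H-nonnegative square root. Consequently, for any H-nonnegative square root A of B, there are H-nonnegative matrices arbitrarily close to B having no H-nonnegative square root. -/

import Mathlib

open Matrix
open scoped ComplexOrder

attribute [local instance] Matrix.normedAddCommGroup

lemma psd_diag (a : ℝ) (ha : 0 ≤ a) :
    (!![(1 : ℂ), 0; 0, -1] * !![(a : ℂ), 0; 0, -(a : ℂ)]).PosSemidef := by
  have h : !![(1 : ℂ), 0; 0, -1] * !![(a : ℂ), 0; 0, -(a : ℂ)]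
      = Matrix.diagonal ![(a : ℂ), (a : ℂ)] := by
    ext i j; fin_cases i <;> fin_cases j <;>
      simp [Matrix.mul_apply, Fin.sum_univ_two, Matrix.diagonal]
  rw [h]
  refine Matrix.PosSemidef.diagonal ?_
  intro i
  fin_cases i <;> simpa using (by exact_mod_cast ha : (0 : ℂ) ≤ (a : ℂ))

lemma no_root (a : ℝ) (ha : 0 < a) :
    ¬ ∃ A : Matrix (Fin 2) (Fin 2) ℂ,
        A ^ 2 = !![(a : ℂ), 0; 0, -(a : ℂ)] ∧
        (!![(1 : ℂ), 0; 0, -1] * A).PosSemidef := by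
  rintro ⟨A, h2, hps⟩
  set p := A 0 0 with hp
  set q := A 0 1 with hq
  set r := A 1 0 with hr
  set s := A 1 1 with hs
  rw [pow_two] at h2
  have e00 : p * p + q * r = (a : ℂ) := by
    have := congrFun (congrFun h2 0) 0
    simpa [Matrix.mul_apply, Fin.sum_univ_two] using this
  have e01 : p * q + q * s = 0 := by
    have := congrFun (congrFun h2 0) 1
    simpa [Matrix.mul_apply, Fin.sum_univ_two] using this
  have e11 : r * q + s * s = -(a : ℂ) := by
    have := congrFun (congrFun h2 1) 1
    simpa [Matrix.mul_apply, Fin.sum_univ_two] using this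
  have hHA : !![(1 : ℂ), 0; 0, -1] * A = !![p, q; -r, -s] := by
    ext i j; fin_cases i <;> fin_cases j <;>
      simp [Matrix.mul_apply, Fin.sum_univ_two, hp, hq, hr, hs]
  have hherm := hps.1
  rw [hHA] at hherm
  have hs_real : (starRingEnd ℂ) s = s := by
    have := congrFun (congrFun hherm 1) 1
    simp [Matrix.conjTranspose_apply] at this
    simpa using this
  have hq0 : q * (p + s) = 0 := by ring_nf; ring_nf at e01; linear_combination e01
  rcases mul_eq_zero.mp hq0 with hq' | hps0
  · -- q = 0, so s^2 = -a with s real: contradiction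
    rw [hq', mul_zero, zero_add] at e11
    have hsim : s.im = 0 := by
      have := Complex.conj_eq_iff_im.mp hs_real; exact this
    have : (s.re : ℂ) * s.re = -(a : ℝ) := by
      have hse : s = (s.re : ℂ) := by
        rw [Complex.ext_iff]; simp [hsim]
      rw [← hse]; exact_mod_cast e11
    have hre : s.re * s.re = -a := by exact_mod_cast this
    nlinarith [sq_nonneg s.re]
  · -- p + s = 0
    have hsp : s = -p := by linear_combination hps0
    rw [hsp] at e11
    have h2a : (2 : ℂ) * a = 0 := by linear_combination e11 - e00
    have : (a : ℝ) = 0 := by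
      have := mul_eq_zero.mp h2a
      rcases this with h | h
      · norm_num at h
      · exact_mod_cast h
    linarith

theorem no_stable_H_nonnegative_sq_root_diag :
    (∀ a : ℝ, 0 < a → a ≤ 1 →
      ((!![(1 : ℂ), 0; 0, -1] * !![(a : ℂ), 0; 0, -(a : ℂ)]).PosSemidef ∧
        ¬ ∃ A : Matrix (Fin 2) (Fin 2) ℂ,
            A ^ 2 = !![(a : ℂ), 0; 0, -(a : ℂ)] ∧
            (!![(1 : ℂ), 0; 0, -1] * A).PosSemidef)) ∧
    ∀ ε > (0 : ℝ), ∃ B' : Matrix (Fin 2) (Fin 2) ℂ,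
      (!![(1 : ℂ), 0; 0, -1] * B').PosSemidef ∧ ‖B' - 0‖ < ε ∧
      ¬ ∃ A : Matrix (Fin 2) (Fin 2) ℂ,
          A ^ 2 = B' ∧ (!![(1 : ℂ), 0; 0, -1] * A).PosSemidef := by
  constructor
  · intro a ha _
    exact ⟨psd_diag a ha.le, no_root a ha⟩
  · intro ε hε
    set a : ℝ := min (ε / 2) 1 with hadef
    have ha0 : 0 < a := lt_min (by linarith) one_pos
    refine ⟨!![(a : ℂ), 0; 0, -(a : ℂ)], psd_diag a ha0.le, ?_, no_root a ha0⟩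
    rw [sub_zero]
    have hle : ‖!![(a : ℂ), 0; 0, -(a : ℂ)]‖ ≤ ε / 2 := by
      apply Matrix.norm_le_iff (by linarith) |>.mpr
      intro i j
      fin_cases i <;> fin_cases j <;> simp [abs_of_pos ha0, hadef] <;>
        linarith [min_le_left (ε / 2) 1, abs_of_pos (show (0:ℝ) < min (ε / 2) 1 from ha0)]
    linarith
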